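/- Let n, p ≥ 1, let X, U ∈ ℝ^{n×p} with W = X + U, and denote by x_i, u_i, w_i the i-th rows. Let μ : ℝ → ℝ be a polynomial function of degree at most R (so μ^{(r)} ≡ 0 for all r > R), β⁰ ∈ ℝ^p, y ∈ ℝ^n, and set ε_i = y_i − μ(x_iᵀβ⁰). Assume: (i) (1/n)∑_{i=1}^n w_{ij}² = 1 for every j; (ii) (1/n) max_{1≤j≤p} |∑_{i=1}^n w_{ij} ε_i| ≤ λ; (iii) |u_{ij}| ≤ δ for all i, j. Then for every j = 1,…,p: (1/n)|∑_{i=1}^n w_{ij}(y_i − μ(w_iᵀβ⁰))| ≤ λ + ∑_{r=1}^R δ^r/(r!·√n) · ‖β⁰‖₁^r · (∑_{i=1}^n μ^{(r)}(w_iᵀβ⁰)²)^{1/2}, i.e. β⁰ belongs to the feasible set Θ^R of the order-R generalized matrix uncertainty selector. -/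

import Mathlib

open Finset Polynomial

lemma iterDeriv_poly (P : Polynomial ℝ) (r : ℕ) :
    iteratedDeriv r (fun x => P.eval x) = fun x => (derivative^[r] P).eval x := by
  induction r with
  | zero => simp
  | succ n ih =>
    rw [iteratedDeriv_succ, ih, Function.iterate_succ_apply']
    funext x
    exact Polynomial.deriv (p := derivative^[n] P)

lemma poly_taylor (P : Polynomial ℝ) (R : ℕ) (hdeg : P.natDegree ≤ R) (a c : ℝ) :
    P.eval a = ∑ r ∈ Finset.range (R + 1),
      (derivative^[r] P).eval c * (a - c) ^ r / r.factorial := by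
  have h1 : P.eval a = (taylor c P).eval (a - c) := (taylor_eval_sub c P a).symm
  have h2 : (taylor c P).natDegree < R + 1 := by
    rw [natDegree_taylor]; omega
  rw [h1, Polynomial.eval_eq_sum_range' h2]
  refine Finset.sum_congr rfl fun r _ => ?_
  rw [taylor_coeff]
  have h3 : (r.factorial : ℝ) • (hasseDeriv r P).eval c = (derivative^[r] P).eval c := by
    have := congrFun (factorial_smul_hasseDeriv (R := ℝ) r) P
    rw [← this]
    simp [Polynomial.eval_smul]
  have hfac : (r.factorial : ℝ) ≠ 0 := Nat.cast_ne_zero.mpr r.factorial_ne_zero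
  field_simp
  rw [smul_eq_mul] at h3
  linear_combination (a - c) ^ r * h3

lemma cs_abs {ι : Type*} (s : Finset ι) (f g : ι → ℝ) :
    |∑ i ∈ s, f i * g i| ≤ Real.sqrt (∑ i ∈ s, f i ^ 2) * Real.sqrt (∑ i ∈ s, g i ^ 2) := by
  have h := sum_mul_sq_le_sq_mul_sq s f g
  have := Real.sqrt_le_sqrt h
  rwa [Real.sqrt_sq_eq_abs, Real.sqrt_mul (by positivity)] at this

/-- Order-`R` version of Proposition 1 for a polynomial mean function: if `μ` is
a polynomial of degree at most `R`, the measured covariates are standardized,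
`(1/n) max_j |∑ᵢ wᵢⱼ εᵢ| ≤ λ` and `|uᵢⱼ| ≤ δ`, then `β⁰` belongs to the
feasible set `Θ^R` of the order-`R` generalized matrix uncertainty selector. -/
theorem stmt_1 (n p R : ℕ) (hn : 1 ≤ n) (hp : 1 ≤ p)
    (X U W : Fin n → Fin p → ℝ)
    (hW : ∀ i j, W i j = X i j + U i j)
    (μ : ℝ → ℝ) (P : Polynomial ℝ) (hdeg : P.natDegree ≤ R)
    (hμP : ∀ x, μ x = P.eval x)
    (β : Fin p → ℝ) (y : Fin n → ℝ) (ε : Fin n → ℝ)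
    (hε : ∀ i, ε i = y i - μ (∑ j, X i j * β j))
    (lam δ : ℝ)
    (hstd : ∀ j, (1 / (n : ℝ)) * ∑ i, (W i j) ^ 2 = 1)
    (hlam : ∀ j, (1 / (n : ℝ)) * |∑ i, W i j * ε i| ≤ lam)
    (hδ : ∀ i j, |U i j| ≤ δ) :
    ∀ j, (1 / (n : ℝ)) * |∑ i, W i j * (y i - μ (∑ j', W i j' * β j'))| ≤
      lam + ∑ r ∈ Finset.Icc 1 R,
        δ ^ r / ((Nat.factorial r : ℝ) * Real.sqrt n) * (∑ j', |β j'|) ^ r *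
          Real.sqrt (∑ i, (iteratedDeriv r μ (∑ j', W i j' * β j')) ^ 2) := by
  intro j
  have hn0 : (0:ℝ) < n := by exact_mod_cast hn
  have hμf : μ = fun x => P.eval x := funext hμP
  have hid : ∀ r, iteratedDeriv r μ = fun x => (derivative^[r] P).eval x := by
    intro r; rw [hμf, iterDeriv_poly]
  simp only [hid]
  set B : ℝ := ∑ j', |β j'| with hB
  have hB0 : 0 ≤ B := Finset.sum_nonneg fun _ _ => abs_nonneg _
  have hδ0 : 0 ≤ δ := le_trans (abs_nonneg _) (hδ ⟨0, hn⟩ ⟨0, hp⟩)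
  set s : Fin n → ℝ := fun i => ∑ j', W i j' * β j' with hs
  set t : Fin n → ℝ := fun i => ∑ j', U i j' * β j' with ht
  have hts : ∀ i, |t i| ≤ δ * B := by
    intro i
    calc |t i| ≤ ∑ j', |U i j' * β j'| := Finset.abs_sum_le_sum_abs _ _
    _ ≤ ∑ j', δ * |β j'| := by
        refine Finset.sum_le_sum fun j' _ => ?_
        rw [abs_mul]
        exact mul_le_mul_of_nonneg_right (hδ i j') (abs_nonneg _)
    _ = δ * B := by rw [hB, Finset.mul_sum]
  have hkey : ∀ i, y i - μ (s i) = ε i + ∑ r ∈ Finset.Icc 1 R,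
      (derivative^[r] P).eval (s i) * (-(t i)) ^ r / r.factorial := by
    intro i
    have hx : (∑ j', X i j' * β j') = s i - t i := by
      simp only [hs, ht, ← Finset.sum_sub_distrib]
      refine Finset.sum_congr rfl fun j' _ => ?_
      rw [hW]; ring
    have htay := poly_taylor P R hdeg (s i - t i) (s i)
    have hsub : s i - t i - s i = -(t i) := by ring
    rw [hsub] at htay
    have hsplit : ∑ r ∈ Finset.range (R + 1),
        (derivative^[r] P).eval (s i) * (-(t i)) ^ r / r.factorial
        = P.eval (s i) + ∑ r ∈ Finset.Icc 1 R,
          (derivative^[r] P).eval (s i) * (-(t i)) ^ r / r.factorial := by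
      rw [Finset.range_eq_Ico, Finset.Ico_add_one_right_eq_Icc, Finset.Icc_eq_cons_Ioc (Nat.zero_le R),
        Finset.sum_cons, ← Finset.Icc_add_one_left_eq_Ioc]
      norm_num
    rw [hε i, hx, hμP, hμP, htay, hsplit]
    ring
  have hsum : ∑ i, W i j * (y i - μ (s i))
      = (∑ i, W i j * ε i) + ∑ r ∈ Finset.Icc 1 R,
        (∑ i, W i j * ((derivative^[r] P).eval (s i) * (-(t i)) ^ r)) / r.factorial := by
    calc ∑ i, W i j * (y i - μ (s i))
        = ∑ i, (W i j * ε i + ∑ r ∈ Finset.Icc 1 R,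
            W i j * ((derivative^[r] P).eval (s i) * (-(t i)) ^ r) / r.factorial) := by
          refine Finset.sum_congr rfl fun i _ => ?_
          rw [hkey i, mul_add, Finset.mul_sum]
          congr 1
          exact Finset.sum_congr rfl fun r _ => by ring
      _ = _ := by
          rw [Finset.sum_add_distrib]
          congr 1
          rw [Finset.sum_comm]
          exact Finset.sum_congr rfl fun r _ => (Finset.sum_div _ _ _).symm
  have hWsq : ∑ i, (W i j)^2 = (n : ℝ) := by
    have h := hstd j
    field_simp at h
    linarith
  have hsn : Real.sqrt n * Real.sqrt n = (n:ℝ) := Real.mul_self_sqrt hn0.le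
  have hsn0 : (0:ℝ) < Real.sqrt n := Real.sqrt_pos.mpr hn0
  have hr : ∀ r ∈ Finset.Icc 1 R,
      (1/(n:ℝ)) * |(∑ i, W i j * ((derivative^[r] P).eval (s i) * (-(t i)) ^ r)) / r.factorial|
      ≤ δ ^ r / ((r.factorial : ℝ) * Real.sqrt n) * B ^ r *
          Real.sqrt (∑ i, ((derivative^[r] P).eval (s i)) ^ 2) := by
    intro r _
    have hfac : (0:ℝ) < (r.factorial : ℝ) := by
      exact_mod_cast r.factorial_pos
    set g : Fin n → ℝ := fun i => (derivative^[r] P).eval (s i) * (-(t i)) ^ r with hg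
    set S : ℝ := Real.sqrt (∑ i, ((derivative^[r] P).eval (s i)) ^ 2) with hS
    have hS0 : 0 ≤ S := Real.sqrt_nonneg _
    have h1 : |∑ i, W i j * g i| ≤ Real.sqrt (∑ i, (W i j)^2) * Real.sqrt (∑ i, g i ^ 2) :=
      cs_abs _ _ _
    have h2 : ∑ i, g i ^ 2 ≤ ((δ*B)^r)^2 * ∑ i, ((derivative^[r] P).eval (s i)) ^ 2 := by
      rw [Finset.mul_sum]
      refine Finset.sum_le_sum fun i _ => ?_
      have ht2 : (t i)^2 ≤ (δ*B)^2 := sq_le_sq' (neg_le_of_abs_le (hts i)) (le_of_abs_le (hts i))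
      have : ((-(t i))^r)^2 ≤ ((δ*B)^r)^2 := by
        rw [← pow_mul, ← pow_mul, mul_comm r 2, pow_mul, pow_mul, neg_pow_two]
        exact pow_le_pow_left₀ (sq_nonneg _) ht2 r
      calc g i ^ 2 = ((derivative^[r] P).eval (s i))^2 * ((-(t i))^r)^2 := by rw [hg]; ring
        _ ≤ ((derivative^[r] P).eval (s i))^2 * ((δ*B)^r)^2 :=
            mul_le_mul_of_nonneg_left this (sq_nonneg _)
        _ = ((δ*B)^r)^2 * ((derivative^[r] P).eval (s i))^2 := by ring
    have h3 : Real.sqrt (∑ i, g i ^ 2) ≤ (δ*B)^r * S := by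
      have := Real.sqrt_le_sqrt h2
      rwa [Real.sqrt_mul (sq_nonneg _), Real.sqrt_sq (by positivity)] at this
    have h4 : |∑ i, W i j * g i| ≤ Real.sqrt n * ((δ*B)^r * S) := by
      calc |∑ i, W i j * g i| ≤ Real.sqrt (∑ i, (W i j)^2) * Real.sqrt (∑ i, g i ^ 2) := h1
        _ ≤ Real.sqrt n * ((δ*B)^r * S) := by
            rw [hWsq]
            exact mul_le_mul_of_nonneg_left h3 (Real.sqrt_nonneg _)
    rw [abs_div, abs_of_pos hfac]
    calc (1/(n:ℝ)) * (|∑ i, W i j * g i| / (r.factorial : ℝ))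
        ≤ (1/(n:ℝ)) * ((Real.sqrt n * ((δ*B)^r * S)) / (r.factorial : ℝ)) := by
          apply mul_le_mul_of_nonneg_left _ (by positivity)
          exact div_le_div_of_nonneg_right h4 hfac.le
      _ = δ ^ r / ((r.factorial : ℝ) * Real.sqrt n) * B ^ r * S := by
          rw [← hsn]
          field_simp
          ring_nf
          rw [Real.sq_sqrt hn0.le]
          ring_nf
          rw [Real.sq_sqrt hn0.le]
          ring
  calc (1/(n:ℝ)) * |∑ i, W i j * (y i - μ (s i))|
      ≤ (1/(n:ℝ)) * (|∑ i, W i j * ε i| + ∑ r ∈ Finset.Icc 1 R,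
          |(∑ i, W i j * ((derivative^[r] P).eval (s i) * (-(t i)) ^ r)) / r.factorial|) := by
        apply mul_le_mul_of_nonneg_left _ (by positivity)
        rw [hsum]
        exact (abs_add_le _ _).trans (by gcongr; exact Finset.abs_sum_le_sum_abs _ _)
    _ = (1/(n:ℝ)) * |∑ i, W i j * ε i| + ∑ r ∈ Finset.Icc 1 R,
          (1/(n:ℝ)) * |(∑ i, W i j * ((derivative^[r] P).eval (s i) * (-(t i)) ^ r)) / r.factorial| := by
        rw [mul_add, Finset.mul_sum]
    _ ≤ lam + ∑ r ∈ Finset.Icc 1 R,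
          δ ^ r / ((r.factorial : ℝ) * Real.sqrt n) * B ^ r *
            Real.sqrt (∑ i, ((derivative^[r] P).eval (s i)) ^ 2) := by
        exact add_le_add (hlam j) (Finset.sum_le_sum hr)
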